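/- Let φ = ∃X∀Y Θ be a quantified Boolean formula where Θ is quantifier-free and in disjunctive normal form with all variables among X ∪ Y. If the formula f(φ) is an atomic-level instance of a normal binary tautology, then φ is true. -/

import Mathlib

namespace CirquentCalc

/-- Formulas: literals (negation applied only to atoms), ∧, ∨. -/
inductive Fml where
  | pos : ℕ → Fml
  | neg : ℕ → Fml
  | and : Fml → Fml → Fml
  | or : Fml → Fml → Fml
deriving DecidableEq

namespace Fml

/-- Negation (pushed to atoms, as ¬ applies only to atoms). -/
def negate : Fml → Fml
  | pos n => neg n
  | neg n => pos n
  | and a b => or a.negate b.negate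
  | or a b => and a.negate b.negate

/-- Substitution extended homomorphically. -/
def subst (σ : ℕ → Fml) : Fml → Fml
  | pos n => σ n
  | neg n => (σ n).negate
  | and a b => and (a.subst σ) (b.subst σ)
  | or a b => or (a.subst σ) (b.subst σ)

/-- Classical evaluation under a truth assignment. -/
def eval (v : ℕ → Bool) : Fml → Bool
  | pos n => v n
  | neg n => !(v n)
  | and a b => a.eval v && b.eval v
  | or a b => a.eval v || b.eval v

/-- Number of positive occurrences of atom `a`. -/
def cPos (a : ℕ) : Fml → ℕ
  | pos n => if n = a then 1 else 0
  | neg _ => 0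
  | and f g => f.cPos a + g.cPos a
  | or f g => f.cPos a + g.cPos a

/-- Number of negative occurrences of atom `a`. -/
def cNeg (a : ℕ) : Fml → ℕ
  | pos _ => 0
  | neg n => if n = a then 1 else 0
  | and f g => f.cNeg a + g.cNeg a
  | or f g => f.cNeg a + g.cNeg a

/-- Total number of positive occurrences of atoms. -/
def posOcc : Fml → ℕ
  | pos _ => 1
  | neg _ => 0
  | and f g => f.posOcc + g.posOcc
  | or f g => f.posOcc + g.posOcc

/-- Length: total number of occurrences of literals and connectives. -/
def len : Fml → ℕ
  | pos _ => 1
  | neg _ => 1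
  | and f g => f.len + g.len + 1
  | or f g => f.len + g.len + 1

/-- Number of occurrences of ∧. -/
def nAnd : Fml → ℕ
  | pos _ => 0
  | neg _ => 0
  | and f g => f.nAnd + g.nAnd + 1
  | or f g => f.nAnd + g.nAnd

/-- Number of occurrences of ∨. -/
def nOr : Fml → ℕ
  | pos _ => 0
  | neg _ => 0
  | and f g => f.nOr + g.nOr
  | or f g => f.nOr + g.nOr + 1

end Fml

def Tautology (A : Fml) : Prop := ∀ v, A.eval v = true

/-- No atom has more than two occurrences. -/
def Binary (A : Fml) : Prop := ∀ a, A.cPos a + A.cNeg a ≤ 2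

/-- Whenever an atom occurs twice, one occurrence is positive and one negative. -/
def Normal (A : Fml) : Prop := ∀ a, A.cPos a ≤ 1 ∧ A.cNeg a ≤ 1

def AtomicLevel (σ : ℕ → Fml) : Prop := ∀ n, ∃ m, σ n = Fml.pos m

/-- `F` is an instance of `B`: σ(B) = F for some substitution σ. -/
def InstanceOf (F B : Fml) : Prop := ∃ σ, B.subst σ = F

/-- `F` is an atomic-level instance of `B`. -/
def AtomicInstanceOf (F B : Fml) : Prop := ∃ σ, AtomicLevel σ ∧ B.subst σ = F

/-- A cirquent: a pool of (occurrences of) formulas, and a list of ogroups,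
each an (index-)set of oformulas of the pool. -/
structure Cirquent where
  pool : List Fml
  groups : List (Finset ℕ)

def emptyCirquent : Cirquent := ⟨[], []⟩

def idCirquent (F : Fml) : Cirquent := ⟨[F.negate, F], [{0, 1}]⟩

/-- The cirquent with pool ⟨F⟩ and one ogroup containing F. -/
def fmlCirquent (F : Fml) : Cirquent := ⟨[F], [{0}]⟩

/-- Index renaming swapping `i` and `i+1`. -/
def swapIdx (i : ℕ) : ℕ → ℕ := fun j => if j = i then i + 1 else if j = i + 1 then i else j

/-- Index renaming when a new oformula is inserted at position `i`. -/
def insShift (i : ℕ) : ℕ → ℕ := fun j => if j < i then j else j + 1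

/-- Index renaming when the oformulas at positions `i`, `i+1` are merged into one at `i`. -/
def mergeIdx (i : ℕ) : ℕ → ℕ := fun j => if j ≤ i then j else j - 1

/-- Mix: placing the two premise cirquents side by side. -/
def MixStep (A B C : Cirquent) : Prop :=
  C.pool = A.pool ++ B.pool ∧
  C.groups = A.groups ++ B.groups.map (Finset.image (· + A.pool.length))

/-- Oformula exchange: swap two adjacent oformulas, preserving containment. -/
def OfExchStep (P C : Cirquent) : Prop :=
  ∃ (l₁ l₂ : List Fml) (F G : Fml),
    P.pool = l₁ ++ F :: G :: l₂ ∧ C.pool = l₁ ++ G :: F :: l₂ ∧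
    C.groups = P.groups.map (Finset.image (swapIdx l₁.length))

/-- Ogroup exchange: swap two adjacent ogroups. -/
def OgExchStep (P C : Cirquent) : Prop :=
  C.pool = P.pool ∧
  ∃ (g₁ g₂ : List (Finset ℕ)) (Γ Δ : Finset ℕ),
    P.groups = g₁ ++ Γ :: Δ :: g₂ ∧ C.groups = g₁ ++ Δ :: Γ :: g₂

/-- Pool weakening: insert a new oformula, contained in no ogroup. -/
def PoolWeakStep (P C : Cirquent) : Prop :=
  ∃ (l₁ l₂ : List Fml) (F : Fml),
    P.pool = l₁ ++ l₂ ∧ C.pool = l₁ ++ F :: l₂ ∧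
    C.groups = P.groups.map (Finset.image (insShift l₁.length))

/-- Ogroup weakening: add a new arc between a pre-existing ogroup and oformula. -/
def OgWeakStep (P C : Cirquent) : Prop :=
  C.pool = P.pool ∧
  ∃ (g₁ g₂ : List (Finset ℕ)) (Γ : Finset ℕ) (j : ℕ),
    j < P.pool.length ∧ j ∉ Γ ∧
    P.groups = g₁ ++ Γ :: g₂ ∧ C.groups = g₁ ++ insert j Γ :: g₂

/-- Downward duplication: replace an ogroup by two adjacent copies of it. -/
def DupDownStep (P C : Cirquent) : Prop :=
  C.pool = P.pool ∧
  ∃ (g₁ g₂ : List (Finset ℕ)) (Γ : Finset ℕ),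
    P.groups = g₁ ++ Γ :: g₂ ∧ C.groups = g₁ ++ Γ :: Γ :: g₂

/-- Upward duplication: the converse of downward duplication. -/
def DupUpStep (P C : Cirquent) : Prop :=
  C.pool = P.pool ∧
  ∃ (g₁ g₂ : List (Finset ℕ)) (Γ : Finset ℕ),
    P.groups = g₁ ++ Γ :: Γ :: g₂ ∧ C.groups = g₁ ++ Γ :: g₂

/-- ∨-introduction: merge two adjacent oformulas F, G into F ∨ G. -/
def OrIntroStep (P C : Cirquent) : Prop :=
  ∃ (l₁ l₂ : List Fml) (F G : Fml),
    P.pool = l₁ ++ F :: G :: l₂ ∧ C.pool = l₁ ++ (Fml.or F G) :: l₂ ∧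
    C.groups = P.groups.map (Finset.image (mergeIdx l₁.length))

/-- The merging of the ogroup list in ∧-introduction: no ogroup contains both `i`
and `i+1`; every ogroup containing `i` is immediately followed by one containing
`i+1` and vice versa; such pairs are merged. -/
inductive AndMerge (i : ℕ) : List (Finset ℕ) → List (Finset ℕ) → Prop where
  | nil : AndMerge i [] []
  | skip {Γ : Finset ℕ} {l l' : List (Finset ℕ)} :
      i ∉ Γ → (i + 1) ∉ Γ → AndMerge i l l' → AndMerge i (Γ :: l) (Γ :: l')
  | merge {Γ Δ : Finset ℕ} {l l' : List (Finset ℕ)} :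
      i ∈ Γ → (i + 1) ∉ Γ → (i + 1) ∈ Δ → i ∉ Δ →
      AndMerge i l l' → AndMerge i (Γ :: Δ :: l) ((Γ ∪ Δ) :: l')

/-- ∧-introduction. -/
def AndIntroStep (P C : Cirquent) : Prop :=
  ∃ (l₁ l₂ : List Fml) (F G : Fml) (merged : List (Finset ℕ)),
    P.pool = l₁ ++ F :: G :: l₂ ∧ C.pool = l₁ ++ (Fml.and F G) :: l₂ ∧
    AndMerge l₁.length P.groups merged ∧
    C.groups = merged.map (Finset.image (mergeIdx l₁.length))

inductive RuleName where
  | emptyAx | idAx | mix | ofExch | ogExch | poolWeak | ogWeak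
  | dupDown | dupUp | orIntro | andIntro
deriving DecidableEq

/-- The unary (one-premise) rules, by name. -/
def unRel : RuleName → Cirquent → Cirquent → Prop
  | .ofExch => OfExchStep
  | .ogExch => OgExchStep
  | .poolWeak => PoolWeakStep
  | .ogWeak => OgWeakStep
  | .dupDown => DupDownStep
  | .dupUp => DupUpStep
  | .orIntro => OrIntroStep
  | .andIntro => AndIntroStep
  | _ => fun _ _ => False

/-- Proof trees: each node is labeled by its cirquent and the rule used. -/
inductive PTree where
  | leaf (C : Cirquent) (r : RuleName)
  | un (C : Cirquent) (r : RuleName) (p : PTree)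
  | bin (C : Cirquent) (r : RuleName) (p q : PTree)

namespace PTree

def concl : PTree → Cirquent
  | leaf C _ => C
  | un C _ _ => C
  | bin C _ _ _ => C

/-- Validity: each node follows from its children by the named rule. -/
def Valid : PTree → Prop
  | leaf C r =>
      (r = .emptyAx ∧ C = emptyCirquent) ∨ (r = .idAx ∧ ∃ F, C = idCirquent F)
  | un C r p => p.Valid ∧ unRel r p.concl C
  | bin C r p q => p.Valid ∧ q.Valid ∧ r = .mix ∧ MixStep p.concl q.concl C

/-- Number of applications of rule `r` in the proof. -/
def count (r : RuleName) : PTree → ℕ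
  | leaf _ r' => if r' = r then 1 else 0
  | un _ r' p => (if r' = r then 1 else 0) + p.count r
  | bin _ r' p q => (if r' = r then 1 else 0) + p.count r + q.count r

/-- The cirquents occurring in the proof. -/
def cirquents : PTree → List Cirquent
  | leaf C _ => [C]
  | un C _ p => C :: p.cirquents
  | bin C _ p q => C :: (p.cirquents ++ q.cirquents)

/-- Total number of rule applications (nodes). -/
def nodes : PTree → ℕ
  | leaf _ _ => 1
  | un _ _ p => p.nodes + 1
  | bin _ _ p q => p.nodes + q.nodes + 1

/-- Number of leaves of the proof tree. -/
def leavesCount : PTree → ℕ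
  | leaf _ _ => 1
  | un _ _ p => p.leavesCount
  | bin _ _ p q => p.leavesCount + q.leavesCount

end PTree

/-- A proof uses no duplication. -/
def DupFree (p : PTree) : Prop :=
  p.count RuleName.dupDown = 0 ∧ p.count RuleName.dupUp = 0

/-- Provability of a cirquent in CL5. -/
def ProvesC (C : Cirquent) : Prop := ∃ p : PTree, p.Valid ∧ p.concl = C

/-- Provability of a formula in CL5. -/
def ProvesCL5 (F : Fml) : Prop := ∃ p : PTree, p.Valid ∧ p.concl = fmlCirquent F

/-- Provability of a formula in CL5⁻ (CL5 without duplication). -/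
def ProvesCL5m (F : Fml) : Prop :=
  ∃ p : PTree, p.Valid ∧ DupFree p ∧ p.concl = fmlCirquent F

/-- Number of arcs of a cirquent (sum of the sizes of its ogroups). -/
def Cirquent.arcs (C : Cirquent) : ℕ := (C.groups.map Finset.card).sum

/-- Size of a cirquent: sum of the lengths of the oformulas in its pool plus
the sum of the sizes of its ogroups. -/
def Cirquent.size (C : Cirquent) : ℕ := (C.pool.map Fml.len).sum + C.arcs

/-- Size of a proof: the sum of the sizes of the cirquents it contains. -/
def PTree.size (p : PTree) : ℕ := (p.cirquents.map Cirquent.size).sum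

/-- Total number of positive occurrences of atoms in the pool. -/
def Cirquent.poolPosOcc (C : Cirquent) : ℕ := (C.pool.map Fml.posOcc).sum

end CirquentCalc

namespace CirquentCalc

/-! The TQBF-Σ₂ reduction. A literal is a pair (atom, polarity); a quantifier-free
Boolean formula in disjunctive normal form is a list of conjunctions of literals. -/

abbrev Lit := ℕ × Bool
abbrev DNF := List (List Lit)

def evalLit (b : ℕ → Bool) (l : Lit) : Bool := if l.2 then b l.1 else !(b l.1)

def evalDNF (b : ℕ → Bool) (Θ : DNF) : Bool := Θ.any fun c => c.all (evalLit b)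

/-- ∃X∀Y Θ is true: some assignment to X makes Θ true under every extension. -/
def QBFTrue (X : Finset ℕ) (Θ : DNF) : Prop :=
  ∃ a : ℕ → Bool, ∀ b : ℕ → Bool, (∀ x ∈ X, b x = a x) → evalDNF b Θ = true

/-- Injective code for the fresh atoms used in f(φ). -/
def code (t z i j : ℕ) : ℕ := Nat.pair t (Nat.pair z (Nat.pair i j))

/-- The fresh atom Z^z. -/
def Zc (z : ℕ) : ℕ := code 0 z 0 0
/-- The fresh atom uᵢ^z. -/
def uc (z i : ℕ) : ℕ := code 1 z i 0
/-- The fresh atom vⱼ^z. -/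
def vc (z j : ℕ) : ℕ := code 2 z j 0
/-- The fresh atom P_{i,j}^y. -/
def Pc (y i j : ℕ) : ℕ := code 3 y i j
/-- A spare fresh atom (for degenerate empty disjunctions/conjunctions). -/
def dAtom : ℕ := code 4 0 0 0

/-- ⊥ as an abbreviation (used only in degenerate cases). -/
def botQ : Fml := Fml.and (Fml.pos dAtom) (Fml.neg dAtom)
/-- ⊤ as an abbreviation (used only in degenerate cases). -/
def topQ : Fml := Fml.or (Fml.pos dAtom) (Fml.neg dAtom)

/-- Disjunction of a list of formulas. -/
def bigOrQ (d : Fml) : List Fml → Fml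
  | [] => d
  | [a] => a
  | a :: b :: r => Fml.or a (bigOrQ d (b :: r))

/-- Conjunction of a list of formulas. -/
def bigAndQ (d : Fml) : List Fml → Fml
  | [] => d
  | [a] => a
  | a :: b :: r => Fml.and a (bigAndQ d (b :: r))

/-- Number of occurrences of the literal (z, s) in a list of literals. -/
def cnt (L : List Lit) (z : ℕ) (s : Bool) : ℕ := (L.filter fun l => l == (z, s)).length

/-- g(z) := Z^z ∧ (Z^z → u₁^z ∧ ⋯ ∧ u_{k^z}^z) ∧ (Z^z → ¬v₁^z ∧ ⋯ ∧ ¬v_{t^z}^z),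
a conjunct being omitted when k^z resp. t^z is 0; A → B is ¬A ∨ B. -/
def gz (flat : List Lit) (z : ℕ) : Fml :=
  let k := cnt flat z true
  let t := cnt flat z false
  let c1 : List Fml :=
    if k = 0 then [] else
      [Fml.or (Fml.neg (Zc z))
        (bigAndQ topQ ((List.range k).map fun i => Fml.pos (uc z (i + 1))))]
  let c2 : List Fml :=
    if t = 0 then [] else
      [Fml.or (Fml.neg (Zc z))
        (bigAndQ topQ ((List.range t).map fun j => Fml.neg (vc z (j + 1))))]
  bigAndQ topQ (Fml.pos (Zc z) :: (c1 ++ c2))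

/-- The index of the occurrence (1-based, counted among occurrences of the same
literal) of the literal at global position `w` of the flattened DNF. -/
def occIdx (flat : List Lit) (w : ℕ) (l : Lit) : ℕ := cnt (flat.take w) l.1 l.2 + 1

/-- Replacement of the literal `l` occurring at global position `w`:
an occurrence of z ∈ X becomes the corresponding uᵢ^z (resp. ¬vⱼ^z); an
occurrence of y ∉ X becomes the corresponding disjunction of P-literals. -/
def repl (X : Finset ℕ) (flat : List Lit) (w : ℕ) (l : Lit) : Fml :=
  let i := occIdx flat w l
  if l.1 ∈ X then
    if l.2 then Fml.pos (uc l.1 i) else Fml.neg (vc l.1 i)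
  else
    if l.2 then
      bigOrQ botQ ((List.range (cnt flat l.1 false)).map fun j =>
        Fml.pos (Pc l.1 i (j + 1)))
    else
      bigOrQ botQ ((List.range (cnt flat l.1 true)).map fun i' =>
        Fml.neg (Pc l.1 (i' + 1) i))

/-- Pair each literal of a conjunction with its global position, starting at `w`. -/
def idxConj : ℕ → List Lit → List (ℕ × Lit)
  | _, [] => []
  | w, a :: r => (w, a) :: idxConj (w + 1) r

/-- Pair each literal of a DNF with its global position. -/
def idxDNF : ℕ → DNF → List (List (ℕ × Lit))
  | _, [] => []
  | w, c :: r => idxConj w c :: idxDNF (w + c.length) r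

/-- The consequent of f(φ): Θ with each literal occurrence replaced. -/
def consequentQ (X : Finset ℕ) (Θ : DNF) : Fml :=
  let flat := Θ.flatten
  bigOrQ botQ ((idxDNF 0 Θ).map fun c =>
    bigAndQ topQ (c.map fun p => repl X flat p.1 p.2))

/-- f(φ) := (g(z₁) ∧ ⋯ ∧ g(z_l)) → Σ, where → is ¬A ∨ B with negation pushed
to atoms (when X is empty the antecedent is absent). -/
def fQBF (X : Finset ℕ) (Θ : DNF) : Fml :=
  match (X.sort (· ≤ ·)).map (gz Θ.flatten) with
  | [] => consequentQ X Θ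
  | g :: gs => Fml.or (Fml.negate (bigAndQ topQ (g :: gs))) (consequentQ X Θ)

end CirquentCalc
namespace CirquentCalc

section Proof

variable {σ : ℕ → Fml} {g : ℕ → ℕ} {e : ℕ → Bool}

lemma subst_inv_pos (hg : ∀ n, σ n = Fml.pos (g n)) {B : Fml} {a : ℕ}
    (h : B.subst σ = Fml.pos a) : ∃ m, B = Fml.pos m ∧ g m = a := by
  cases B with
  | pos n =>
    simp only [Fml.subst, hg] at h
    exact ⟨n, rfl, by injection h⟩
  | neg n => simp only [Fml.subst, hg, Fml.negate] at h; exact Fml.noConfusion h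
  | and f1 f2 => simp only [Fml.subst] at h; exact Fml.noConfusion h
  | or f1 f2 => simp only [Fml.subst] at h; exact Fml.noConfusion h

lemma subst_inv_neg (hg : ∀ n, σ n = Fml.pos (g n)) {B : Fml} {a : ℕ}
    (h : B.subst σ = Fml.neg a) : ∃ m, B = Fml.neg m ∧ g m = a := by
  cases B with
  | pos n => simp only [Fml.subst, hg] at h; exact Fml.noConfusion h
  | neg n =>
    simp only [Fml.subst, hg, Fml.negate] at h
    exact ⟨n, rfl, by injection h⟩
  | and f1 f2 => simp only [Fml.subst] at h; exact Fml.noConfusion h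
  | or f1 f2 => simp only [Fml.subst] at h; exact Fml.noConfusion h

lemma subst_inv_and (hg : ∀ n, σ n = Fml.pos (g n)) {B : Fml} {F G : Fml}
    (h : B.subst σ = Fml.and F G) :
    ∃ B1 B2, B = Fml.and B1 B2 ∧ B1.subst σ = F ∧ B2.subst σ = G := by
  cases B with
  | pos n => simp only [Fml.subst, hg] at h; exact Fml.noConfusion h
  | neg n => simp only [Fml.subst, hg, Fml.negate] at h; exact Fml.noConfusion h
  | and f1 f2 =>
    simp only [Fml.subst, Fml.and.injEq] at h
    exact ⟨f1, f2, rfl, h.1, h.2⟩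
  | or f1 f2 => simp only [Fml.subst] at h; exact Fml.noConfusion h

lemma subst_inv_or (hg : ∀ n, σ n = Fml.pos (g n)) {B : Fml} {F G : Fml}
    (h : B.subst σ = Fml.or F G) :
    ∃ B1 B2, B = Fml.or B1 B2 ∧ B1.subst σ = F ∧ B2.subst σ = G := by
  cases B with
  | pos n => simp only [Fml.subst, hg] at h; exact Fml.noConfusion h
  | neg n => simp only [Fml.subst, hg, Fml.negate] at h; exact Fml.noConfusion h
  | and f1 f2 => simp only [Fml.subst] at h; exact Fml.noConfusion h
  | or f1 f2 =>
    simp only [Fml.subst, Fml.or.injEq] at h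
    exact ⟨f1, f2, rfl, h.1, h.2⟩

lemma negate_bigAndQ : ∀ (l : List Fml) (d : Fml),
    (bigAndQ d l).negate = bigOrQ d.negate (l.map Fml.negate) := by
  intro l
  induction l with
  | nil => intro d; rfl
  | cons a tl ih =>
    intro d
    cases tl with
    | nil => rfl
    | cons b r =>
      show (Fml.and a (bigAndQ d (b :: r))).negate = _
      simp only [Fml.negate, ih, List.map_cons, bigOrQ]

lemma orSpine_false (hg : ∀ n, σ n = Fml.pos (g n)) :
    ∀ (lf : List Fml), lf ≠ [] → ∀ (d B : Fml), B.subst σ = bigOrQ d lf →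
      (∀ F ∈ lf, ∀ Bf : Fml, Bf.subst σ = F → Bf.eval e = false) →
      B.eval e = false := by
  intro lf
  induction lf with
  | nil => intro h; exact absurd rfl h
  | cons a tl ih =>
    intro _ d B hB hF
    cases tl with
    | nil => exact hF a (by simp) B hB
    | cons b r =>
      obtain ⟨B1, B2, rfl, h1, h2⟩ := subst_inv_or hg hB
      have e1 := hF a (by simp) B1 h1
      have e2 := ih (by simp) d B2 h2 (fun F hFm => hF F (by simp [hFm]))
      simp [Fml.eval, e1, e2]

lemma orSpine_true (hg : ∀ n, σ n = Fml.pos (g n)) :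
    ∀ (lf : List Fml) (d B : Fml), B.subst σ = bigOrQ d lf → B.eval e = true →
      (∃ Bd : Fml, Bd.subst σ = d ∧ Bd.eval e = true) ∨
      ∃ F ∈ lf, ∃ Bf : Fml, Bf.subst σ = F ∧ Bf.eval e = true := by
  intro lf
  induction lf with
  | nil => intro d B hB hE; exact Or.inl ⟨B, hB, hE⟩
  | cons a tl ih =>
    intro d B hB hE
    cases tl with
    | nil => exact Or.inr ⟨a, by simp, B, hB, hE⟩
    | cons b r =>
      obtain ⟨B1, B2, rfl, h1, h2⟩ := subst_inv_or hg hB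
      simp only [Fml.eval, Bool.or_eq_true] at hE
      rcases hE with hE | hE
      · exact Or.inr ⟨a, by simp, B1, h1, hE⟩
      · rcases ih d B2 h2 hE with h | ⟨F, hFm, Bf, hs, hv⟩
        · exact Or.inl h
        · exact Or.inr ⟨F, by simp [hFm], Bf, hs, hv⟩

lemma andSpine_true (hg : ∀ n, σ n = Fml.pos (g n)) :
    ∀ (lf : List Fml) (d B : Fml), B.subst σ = bigAndQ d lf → B.eval e = true →
      ∀ F ∈ lf, ∃ Bf : Fml, Bf.subst σ = F ∧ Bf.eval e = true := by
  intro lf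
  induction lf with
  | nil => intro d B _ _ F hF; simp at hF
  | cons a tl ih =>
    intro d B hB hE F hF
    cases tl with
    | nil =>
      simp only [List.mem_singleton] at hF
      exact ⟨B, hF ▸ hB, hE⟩
    | cons b r =>
      obtain ⟨B1, B2, rfl, h1, h2⟩ := subst_inv_and hg hB
      simp only [Fml.eval, Bool.and_eq_true] at hE
      rcases List.mem_cons.1 hF with rfl | hF
      · exact ⟨B1, h1, hE.1⟩
      · exact ih d B2 h2 hE.2 F hF

lemma bot_false (hg : ∀ n, σ n = Fml.pos (g n))
    (hD : ∀ m, g m = dAtom → e m = false) {B : Fml}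
    (h : B.subst σ = botQ) : B.eval e = false := by
  obtain ⟨B1, B2, rfl, h1, _⟩ := subst_inv_and hg h
  obtain ⟨m, rfl, hm⟩ := subst_inv_pos hg h1
  simp [Fml.eval, hD m hm]

/-- Conditions on the assignment `e` at the atoms of `B` relevant to `z`. -/
def ZCond (g : ℕ → ℕ) (e : ℕ → Bool) (z : ℕ) (av : Bool) (nzv : ℕ) : Prop :=
  (∀ m, g m = Zc z → e m = decide (m = nzv)) ∧
  (∀ m i, g m = uc z i → e m = av) ∧
  (∀ m j, g m = vc z j → e m = av)

lemma gz_def (flat : List Lit) (z : ℕ) :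
    gz flat z = bigAndQ topQ (Fml.pos (Zc z) ::
      ((if cnt flat z true = 0 then [] else
        [Fml.or (Fml.neg (Zc z)) (bigAndQ topQ
          ((List.range (cnt flat z true)).map fun i => Fml.pos (uc z (i + 1))))]) ++
       (if cnt flat z false = 0 then [] else
        [Fml.or (Fml.neg (Zc z)) (bigAndQ topQ
          ((List.range (cnt flat z false)).map fun j => Fml.neg (vc z (j + 1))))]))) := rfl

lemma uSpine_false (hg : ∀ n, σ n = Fml.pos (g n)) {z : ℕ} {k : ℕ} (hk : k ≠ 0)
    {Bu : Fml}
    (h : Bu.subst σ = (bigAndQ topQ ((List.range k).map fun i => Fml.pos (uc z (i + 1)))).negate)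
    (hU : ∀ m i, g m = uc z i → e m = true) : Bu.eval e = false := by
  rw [negate_bigAndQ, List.map_map] at h
  refine orSpine_false hg _ (by simpa using hk) _ _ h ?_
  intro F hF Bf hBf
  simp only [List.mem_map, List.mem_range, Function.comp] at hF
  obtain ⟨i, _, rfl⟩ := hF
  obtain ⟨m, rfl, hm⟩ := subst_inv_neg hg hBf
  simp [Fml.eval, hU m _ hm]

lemma vSpine_false (hg : ∀ n, σ n = Fml.pos (g n)) {z : ℕ} {t : ℕ} (ht : t ≠ 0)
    {Bv : Fml}
    (h : Bv.subst σ = (bigAndQ topQ ((List.range t).map fun j => Fml.neg (vc z (j + 1)))).negate)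
    (hV : ∀ m j, g m = vc z j → e m = false) : Bv.eval e = false := by
  rw [negate_bigAndQ, List.map_map] at h
  refine orSpine_false hg _ (by simpa using ht) _ _ h ?_
  intro F hF Bf hBf
  simp only [List.mem_map, List.mem_range, Function.comp] at hF
  obtain ⟨j, _, rfl⟩ := hF
  obtain ⟨m, rfl, hm⟩ := subst_inv_pos hg hBf
  simp [Fml.eval, hV m _ hm]

lemma antez (hg : ∀ n, σ n = Fml.pos (g n)) {Bz : Fml} {flat : List Lit} {z : ℕ}
    (hN : ∀ m, Fml.cPos m Bz ≤ 1)
    (h : Bz.subst σ = (gz flat z).negate) :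
    ∃ (av : Bool) (nzv : ℕ), ∀ e : ℕ → Bool, ZCond g e z av nzv →
      Bz.eval e = false := by
  rw [gz_def] at h
  by_cases hk : cnt flat z true = 0 <;> by_cases ht : cnt flat z false = 0
  · -- no c1, no c2
    rw [if_pos hk, if_pos ht] at h
    simp only [List.append_nil] at h
    obtain ⟨m0, rfl, hm0⟩ := subst_inv_neg hg h
    exact ⟨true, m0, fun e hC => by simp [Fml.eval, hC.1 m0 hm0]⟩
  · -- c1 = [], c2 present
    rw [if_pos hk, if_neg ht] at h
    simp only [List.nil_append] at h
    obtain ⟨B0, B1, rfl, h0, h1⟩ := subst_inv_or hg h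
    obtain ⟨m0, rfl, hm0⟩ := subst_inv_neg hg h0
    obtain ⟨B10, Bv, rfl, h10, hv⟩ := subst_inv_and hg h1
    obtain ⟨m2, rfl, hm2⟩ := subst_inv_pos hg h10
    refine ⟨!decide (m2 = m0), m0, fun e hC => ?_⟩
    obtain ⟨hZ, hU, hV⟩ := hC
    by_cases hmm : m2 = m0
    · have hBv : Bv.eval e = false :=
        vSpine_false hg ht hv (fun m j hm => by simp [hV m j hm, hmm])
      simp [Fml.eval, hZ m0 hm0, hBv]
    · simp [Fml.eval, hZ m0 hm0, hZ m2 hm2, hmm]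
  · -- c1 present, c2 = []
    rw [if_neg hk, if_pos ht] at h
    simp only [List.append_nil] at h
    obtain ⟨B0, B1, rfl, h0, h1⟩ := subst_inv_or hg h
    obtain ⟨m0, rfl, hm0⟩ := subst_inv_neg hg h0
    obtain ⟨B10, Bu, rfl, h10, hu⟩ := subst_inv_and hg h1
    obtain ⟨m1, rfl, hm1⟩ := subst_inv_pos hg h10
    refine ⟨true, m0, fun e hC => ?_⟩
    obtain ⟨hZ, hU, hV⟩ := hC
    have hBu : Bu.eval e = false := uSpine_false hg hk hu hU
    simp [Fml.eval, hZ m0 hm0, hBu]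
  · -- both present
    rw [if_neg hk, if_neg ht] at h
    simp only [List.cons_append, List.nil_append] at h
    obtain ⟨B0, B', rfl, h0, h'⟩ := subst_inv_or hg h
    obtain ⟨m0, rfl, hm0⟩ := subst_inv_neg hg h0
    obtain ⟨B1, B2, rfl, h1, h2⟩ := subst_inv_or hg h'
    obtain ⟨B10, Bu, rfl, h10, hu⟩ := subst_inv_and hg h1
    obtain ⟨m1, rfl, hm1⟩ := subst_inv_pos hg h10
    obtain ⟨B20, Bv, rfl, h20, hv⟩ := subst_inv_and hg h2
    obtain ⟨m2, rfl, hm2⟩ := subst_inv_pos hg h20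
    have hm12 : m1 ≠ m2 := by
      intro hEq
      have := hN m1
      simp [Fml.cPos, hEq] at this
      omega
    refine ⟨!decide (m2 = m0), m0, fun e hC => ?_⟩
    obtain ⟨hZ, hU, hV⟩ := hC
    by_cases hmm : m2 = m0
    · have hBv : Bv.eval e = false :=
        vSpine_false hg ht hv (fun m j hm => by simp [hV m j hm, hmm])
      have hm1' : m1 ≠ m0 := hmm ▸ hm12
      simp [Fml.eval, hZ m0 hm0, hZ m1 hm1, hm1', hBv]
    · have hBu : Bu.eval e = false :=
        uSpine_false hg hk hu (fun m i hm => by simp [hU m i hm, hmm])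
      simp [Fml.eval, hZ m0 hm0, hZ m2 hm2, hmm, hBu]

lemma ante (hg : ∀ n, σ n = Fml.pos (g n)) {flat : List Lit} :
    ∀ (L : List ℕ), L ≠ [] → L.Nodup → ∀ Ba : Fml,
      (∀ m, Fml.cPos m Ba ≤ 1) →
      Ba.subst σ = (bigAndQ topQ (L.map (gz flat))).negate →
      ∃ (A : ℕ → Bool) (nz : ℕ → ℕ), ∀ e : ℕ → Bool,
        (∀ z ∈ L, ZCond g e z (A z) (nz z)) → Ba.eval e = false := by
  intro L
  induction L with
  | nil => intro h; exact absurd rfl h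
  | cons z tl ih =>
    intro _ hnd Ba hN h
    cases tl with
    | nil =>
      obtain ⟨av, nzv, hz⟩ := antez hg hN h
      exact ⟨fun _ => av, fun _ => nzv, fun e hC => hz e (hC z (by simp))⟩
    | cons z' r =>
      simp only [List.map_cons] at h
      rw [show bigAndQ topQ (gz flat z :: gz flat z' :: (r.map (gz flat))) =
        Fml.and (gz flat z) (bigAndQ topQ (gz flat z' :: (r.map (gz flat)))) from rfl] at h
      simp only [Fml.negate] at h
      obtain ⟨B1, B2, rfl, h1, h2⟩ := subst_inv_or hg h
      have hN1 : ∀ m, Fml.cPos m B1 ≤ 1 := fun m => by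
        have := hN m; simp [Fml.cPos] at this; omega
      have hN2 : ∀ m, Fml.cPos m B2 ≤ 1 := fun m => by
        have := hN m; simp [Fml.cPos] at this; omega
      obtain ⟨av, nzv, hz⟩ := antez hg hN1 h1
      obtain ⟨A', nz', hih⟩ := ih (by simp) (List.Nodup.of_cons hnd) B2 hN2
        (by simpa using h2)
      have hznt : z ∉ z' :: r := (List.nodup_cons.1 hnd).1
      refine ⟨fun w => if w = z then av else A' w,
              fun w => if w = z then nzv else nz' w, fun e hC => ?_⟩
      have c1 : B1.eval e = false := by
        have hCz : ZCond g e z av nzv := by simpa using hC z (by simp)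
        exact hz e hCz
      have c2 : B2.eval e = false := by
        refine hih e ?_
        intro w hw
        have hwz : w ≠ z := fun hEq => hznt (hEq ▸ hw)
        have hCw : ZCond g e w (A' w) (nz' w) := by
          simpa [hwz] using hC w (by simp [hw])
        exact hCw
      simp [Fml.eval, c1, c2]

lemma repl_lem (hg : ∀ n, σ n = Fml.pos (g n)) {X : Finset ℕ} {flat : List Lit}
    {b : ℕ → Bool} {A : ℕ → Bool}
    (hU : ∀ m z i, g m = uc z i → e m = A z)
    (hV : ∀ m z j, g m = vc z j → e m = A z)
    (hP : ∀ m y i j, g m = Pc y i j → e m = b y)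
    (hD : ∀ m, g m = dAtom → e m = false)
    (hbA : ∀ x ∈ X, b x = A x)
    {w : ℕ} {l : Lit} {Bp : Fml}
    (hsub : Bp.subst σ = repl X flat w l) (hev : Bp.eval e = true) :
    evalLit b l = true := by
  obtain ⟨y, s⟩ := l
  by_cases hx : y ∈ X
  · cases s with
    | true =>
      rw [show repl X flat w (y, true) = Fml.pos (uc y (occIdx flat w (y, true)))
        from by simp [repl, hx]] at hsub
      obtain ⟨m, rfl, hm⟩ := subst_inv_pos hg hsub
      simp only [Fml.eval] at hev
      rw [hU m _ _ hm] at hev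
      simp [evalLit, hbA y hx, hev]
    | false =>
      rw [show repl X flat w (y, false) = Fml.neg (vc y (occIdx flat w (y, false)))
        from by simp [repl, hx]] at hsub
      obtain ⟨m, rfl, hm⟩ := subst_inv_neg hg hsub
      simp only [Fml.eval, Bool.not_eq_true'] at hev
      rw [hV m _ _ hm] at hev
      simp [evalLit, hbA y hx, hev]
  · cases s with
    | true =>
      rw [show repl X flat w (y, true) =
        bigOrQ botQ ((List.range (cnt flat y false)).map fun j =>
          Fml.pos (Pc y (occIdx flat w (y, true)) (j + 1)))
        from by simp [repl, hx]] at hsub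
      rcases orSpine_true hg _ _ _ hsub hev with ⟨Bd, hBd, hBde⟩ | ⟨F, hF, Bf, hs, hv⟩
      · rw [bot_false hg hD hBd] at hBde; exact absurd hBde (by simp)
      · simp only [List.mem_map, List.mem_range] at hF
        obtain ⟨j, _, rfl⟩ := hF
        obtain ⟨m, rfl, hm⟩ := subst_inv_pos hg hs
        simp only [Fml.eval] at hv
        rw [hP m _ _ _ hm] at hv
        simpa [evalLit] using hv
    | false =>
      rw [show repl X flat w (y, false) =
        bigOrQ botQ ((List.range (cnt flat y true)).map fun i' =>
          Fml.neg (Pc y (i' + 1) (occIdx flat w (y, false))))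
        from by simp [repl, hx]] at hsub
      rcases orSpine_true hg _ _ _ hsub hev with ⟨Bd, hBd, hBde⟩ | ⟨F, hF, Bf, hs, hv⟩
      · rw [bot_false hg hD hBd] at hBde; exact absurd hBde (by simp)
      · simp only [List.mem_map, List.mem_range] at hF
        obtain ⟨i', _, rfl⟩ := hF
        obtain ⟨m, rfl, hm⟩ := subst_inv_neg hg hs
        simp only [Fml.eval, Bool.not_eq_true'] at hv
        rw [hP m _ _ _ hm] at hv
        simpa [evalLit] using hv

lemma idxConj_snd : ∀ (w : ℕ) (c : List Lit), (idxConj w c).map Prod.snd = c := by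
  intro w c
  induction c generalizing w with
  | nil => rfl
  | cons a r ih => simp [idxConj, ih]

lemma idxDNF_snd : ∀ (Θ : DNF) (w : ℕ),
    (idxDNF w Θ).map (List.map Prod.snd) = Θ := by
  intro Θ
  induction Θ with
  | nil => intro w; rfl
  | cons c r ih => intro w; simp [idxDNF, idxConj_snd, ih]

lemma conseq (hg : ∀ n, σ n = Fml.pos (g n)) {Bc : Fml} {X : Finset ℕ} {Θ : DNF}
    {b : ℕ → Bool} {A : ℕ → Bool}
    (hU : ∀ m z i, g m = uc z i → e m = A z)
    (hV : ∀ m z j, g m = vc z j → e m = A z)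
    (hP : ∀ m y i j, g m = Pc y i j → e m = b y)
    (hD : ∀ m, g m = dAtom → e m = false)
    (hbA : ∀ x ∈ X, b x = A x)
    (h : Bc.subst σ = consequentQ X Θ)
    (he : Bc.eval e = true) : evalDNF b Θ = true := by
  rw [show consequentQ X Θ = bigOrQ botQ ((idxDNF 0 Θ).map fun c =>
      bigAndQ topQ (c.map fun p => repl X Θ.flatten p.1 p.2)) from rfl] at h
  rcases orSpine_true hg _ _ _ h he with ⟨Bd, hBd, hBde⟩ | ⟨F, hF, Bf, hs, hv⟩
  · rw [bot_false hg hD hBd] at hBde; exact absurd hBde (by simp)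
  · simp only [List.mem_map] at hF
    obtain ⟨c', hc', rfl⟩ := hF
    have hmem : c'.map Prod.snd ∈ Θ := by
      rw [← idxDNF_snd Θ 0]
      exact List.mem_map_of_mem hc'
    rw [evalDNF, List.any_eq_true]
    refine ⟨c'.map Prod.snd, hmem, ?_⟩
    rw [List.all_eq_true]
    intro l hl
    simp only [List.mem_map] at hl
    obtain ⟨p, hp, rfl⟩ := hl
    obtain ⟨Bp, hps, hpe⟩ := andSpine_true hg _ _ _ hs hv _
      (List.mem_map_of_mem (f := fun p => repl X Θ.flatten p.1 p.2) hp)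
    exact repl_lem hg hU hV hP hD hbA hps hpe

/-- The assignment on the atoms of `B` used in the main argument. -/
def mkE (g : ℕ → ℕ) (A : ℕ → Bool) (nz : ℕ → ℕ) (b : ℕ → Bool) : ℕ → Bool :=
  fun m =>
    let c := g m
    let t := c.unpair.1
    let z := c.unpair.2.unpair.1
    if t = 0 then decide (m = nz z) else if t = 3 then b z else
      if t = 4 then false else A z

section mkE
variable {A : ℕ → Bool} {nz : ℕ → ℕ} {b : ℕ → Bool}

lemma mkE_Z {m z : ℕ} (hm : g m = Zc z) :
    mkE g A nz b m = decide (m = nz z) := by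
  simp [mkE, hm, Zc, code, Nat.unpair_pair]

lemma mkE_u {m z i : ℕ} (hm : g m = uc z i) : mkE g A nz b m = A z := by
  simp [mkE, hm, uc, code, Nat.unpair_pair]

lemma mkE_v {m z j : ℕ} (hm : g m = vc z j) : mkE g A nz b m = A z := by
  simp [mkE, hm, vc, code, Nat.unpair_pair]

lemma mkE_P {m y i j : ℕ} (hm : g m = Pc y i j) : mkE g A nz b m = b y := by
  simp [mkE, hm, Pc, code, Nat.unpair_pair]

lemma mkE_d {m : ℕ} (hm : g m = dAtom) : mkE g A nz b m = false := by
  simp [mkE, hm, dAtom, code, Nat.unpair_pair]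

end mkE

end Proof

end CirquentCalc

open CirquentCalc

/-- For φ = ∃X∀Y Θ with Θ quantifier-free in DNF over X ∪ Y, if
f(φ) is an atomic-level instance of a normal binary tautology then φ is true. -/
theorem normal_binary_instance_implies_qbf_true (X Y : Finset ℕ) (Θ : DNF)
    (hXY : Disjoint X Y) (hvars : ∀ c ∈ Θ, ∀ l ∈ c, l.1 ∈ X ∪ Y)
    (h : ∃ B : Fml, Binary B ∧ Normal B ∧ Tautology B ∧
      AtomicInstanceOf (fQBF X Θ) B) :
    QBFTrue X Θ := by
  obtain ⟨B, hBin, hNorm, hTaut, σ, hσA, hsub⟩ := h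
  choose g hg using hσA
  rcases hL : X.sort (· ≤ ·) with _ | ⟨z, zs⟩
  · have hsub' : B.subst σ = consequentQ X Θ := by
      simpa [fQBF, hL] using hsub
    refine ⟨fun _ => true, ?_⟩
    intro b hb
    have hT := hTaut (mkE g (fun _ => true) (fun _ => 0) b)
    exact conseq hg (fun m z i hm => mkE_u hm) (fun m z j hm => mkE_v hm)
      (fun m y i j hm => mkE_P hm) (fun m hm => mkE_d hm)
      (fun x hx => hb x hx) hsub' hT
  · have hnd : (z :: zs).Nodup := hL ▸ X.sort_nodup (· ≤ ·)
    have hsub' : B.subst σ =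
        Fml.or (bigAndQ topQ ((z :: zs).map (gz Θ.flatten))).negate
          (consequentQ X Θ) := by
      simpa [fQBF, hL] using hsub
    obtain ⟨Ba, Bc, rfl, ha, hc⟩ := subst_inv_or hg hsub'
    have hN : ∀ m, Fml.cPos m Ba ≤ 1 := by
      intro m
      have := (hNorm m).1
      simp only [Fml.cPos] at this
      omega
    obtain ⟨A, nz, hante⟩ := ante hg (z :: zs) (by simp) hnd Ba hN ha
    refine ⟨A, ?_⟩
    intro b hb
    have hT := hTaut (mkE g A nz b)
    have hBa : Ba.eval (mkE g A nz b) = false := by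
      refine hante _ ?_
      intro w _
      exact ⟨fun m hm => mkE_Z hm, fun m i hm => mkE_u hm, fun m j hm => mkE_v hm⟩
    have hBc : Bc.eval (mkE g A nz b) = true := by
      simp only [Fml.eval, hBa, Bool.false_or] at hT
      exact hT
    exact conseq hg (fun m z' i hm => mkE_u hm) (fun m z' j hm => mkE_v hm)
      (fun m y i j hm => mkE_P hm) (fun m hm => mkE_d hm) hb hc hBc
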